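/- Given a unit object (I, α) in a strict semi-monoidal 2-category, with chosen left constraint (λ_I, L_I) and right constraint (ρ_I, R_I) at the object I, there exist unique invertible 2-cells E : ρ_I ⟹ α and D : α ⟹ λ_I comparing the left and right constraints with α at the unit object, characterized by equations (I⊗D)∘L = A and (E⊗I)∘R = A where A is the canonical associator 2-cell of α. -/

import Mathlib

open CategoryTheory

universe w v u

section Two
variable {B : Type u} [Bicategory.{w, v} B] [Bicategory.Strict B]

open Bicategory

/-- A 1-cell admitting a pseudo-inverse. -/
def IsEquiArrow {a b : B} (f : a ⟶ b) : Prop :=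
  ∃ g : b ⟶ a, Nonempty (f ≫ g ≅ 𝟙 a) ∧ Nonempty (g ≫ f ≅ 𝟙 b)

/-- A strict (2-functorial, strictly associative) tensor product on a strict 2-category. -/
structure Tensor2 (B : Type u) [Bicategory.{w, v} B] [Bicategory.Strict B] where
  obj : B → B → B
  hom : ∀ {a b c d : B}, (a ⟶ b) → (c ⟶ d) → (obj a c ⟶ obj b d)
  cell : ∀ {a b c d : B} {f f' : a ⟶ b} {g g' : c ⟶ d},
    (f ⟶ f') → (g ⟶ g') → (hom f g ⟶ hom f' g')
  hom_id : ∀ (a c : B), hom (𝟙 a) (𝟙 c) = 𝟙 (obj a c)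
  hom_comp : ∀ {a b c a' b' c' : B} (f : a ⟶ b) (g : b ⟶ c) (f' : a' ⟶ b') (g' : b' ⟶ c'),
    hom (f ≫ g) (f' ≫ g') = hom f f' ≫ hom g g'
  cell_id : ∀ {a b c d : B} (f : a ⟶ b) (g : c ⟶ d), cell (𝟙 f) (𝟙 g) = 𝟙 (hom f g)
  cell_comp : ∀ {a b c d : B} {f f' f'' : a ⟶ b} {g g' g'' : c ⟶ d}
    (η : f ⟶ f') (η' : f' ⟶ f'') (θ : g ⟶ g') (θ' : g' ⟶ g''),
    cell (η ≫ η') (θ ≫ θ') = cell η θ ≫ cell η' θ'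
  cell_whisker : ∀ {a b c a' b' c' : B} {f₁ f₂ : a ⟶ b} {g₁ g₂ : b ⟶ c}
    {f₁' f₂' : a' ⟶ b'} {g₁' g₂' : b' ⟶ c'}
    (η : f₁ ⟶ f₂) (θ : g₁ ⟶ g₂) (η' : f₁' ⟶ f₂') (θ' : g₁' ⟶ g₂'),
    cell (η ▷ g₁ ≫ f₂ ◁ θ) (η' ▷ g₁' ≫ f₂' ◁ θ') =
      eqToHom (hom_comp f₁ g₁ f₁' g₁') ≫ (cell η η' ▷ hom g₁ g₁') ≫
        (hom f₂ f₂' ◁ cell θ θ') ≫ eqToHom (hom_comp f₂ g₂ f₂' g₂').symm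
  assoc : ∀ (a b c : B), obj (obj a b) c = obj a (obj b c)
  hom_assoc : ∀ {a a' b b' c c' : B} (f : a ⟶ a') (g : b ⟶ b') (k : c ⟶ c'),
    hom (hom f g) k ≫ eqToHom (assoc a' b' c') = eqToHom (assoc a b c) ≫ hom f (hom g k)

variable (T : Tensor2 B)

/-- The 2-functor "tensoring with `I` on the left", as a functor on hom-categories. -/
def lFun (I X Y : B) : (X ⟶ Y) ⥤ (T.obj I X ⟶ T.obj I Y) where
  obj f := T.hom (𝟙 I) f
  map η := T.cell (𝟙 (𝟙 I)) η
  map_id f := T.cell_id _ _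
  map_comp {f g h} η θ := by
    have := T.cell_comp (𝟙 (𝟙 I)) (𝟙 (𝟙 I)) η θ
    simpa using this

/-- The 2-functor "tensoring with `I` on the right", as a functor on hom-categories. -/
def rFun (I X Y : B) : (X ⟶ Y) ⥤ (T.obj X I ⟶ T.obj Y I) where
  obj f := T.hom f (𝟙 I)
  map η := T.cell η (𝟙 (𝟙 I))
  map_id f := T.cell_id _ _
  map_comp {f g h} η θ := by
    have := T.cell_comp η θ (𝟙 (𝟙 I)) (𝟙 (𝟙 I))
    simpa using this

/-- Cancellable object: tensoring with it on either side is fully faithful, i.e. induces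
equivalences of hom-categories. -/
def Cancellable2 (I : B) : Prop :=
  (∀ X Y : B, (lFun T I X Y).IsEquivalence) ∧ (∀ X Y : B, (rFun T I X Y).IsEquivalence)

/-- A unit object: a cancellable pseudo-idempotent. -/
def IsUnit2 (I : B) (α : T.obj I I ⟶ I) : Prop :=
  Cancellable2 T I ∧ IsEquiArrow α

end Two

open CategoryTheory Bicategory

section Assoc
variable {B : Type u} [Bicategory.{w, v} B] [Bicategory.Strict B] (T : Tensor2 B)

/-- The 1-cell `I ⊗ α : I⊗(I⊗I) ⟶ I⊗I`. -/
def Ia (I : B) (α : T.obj I I ⟶ I) : T.obj I (T.obj I I) ⟶ T.obj I I :=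
  T.hom (𝟙 I) α

/-- The 1-cell `α ⊗ I : I⊗(I⊗I) ⟶ I⊗I` (transported along strict associativity). -/
def aIR (I : B) (α : T.obj I I ⟶ I) : T.obj I (T.obj I I) ⟶ T.obj I I :=
  eqToHom (T.assoc I I I).symm ≫ T.hom α (𝟙 I)

/-- The 1-cell `I ⊗ α ⊗ I` on the fourfold tensor power. -/
def IaI (I : B) (α : T.obj I I ⟶ I) :
    T.obj I (T.obj (T.obj I I) I) ⟶ T.obj I (T.obj I I) :=
  T.hom (𝟙 I) (T.hom α (𝟙 I))

/-- The defining pasting equation (equation (9) of Joyal–Kock) for the canonical associator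
`A : I⊗α ⟹ α⊗I` of a unit `(I, α)`, relative to a chosen left constraint `(λ_I, L)` and right
constraint `(ρ_I, R)` at `I`. All the equalities of 1-cells needed to paste the faces (which
hold automatically by strict 2-functoriality of the tensor and strictness of the 2-category)
are quantified. -/
def DefinesAssociator (I : B) (α : T.obj I I ⟶ I)
    (lamI : T.obj I I ⟶ I)
    (L : T.hom (𝟙 I) lamI ⟶ aIR T I α) (hL : IsIso L)
    (rhoI : T.obj I I ⟶ I)
    (R : Ia T I α ⟶ eqToHom (T.assoc I I I).symm ≫ T.hom rhoI (𝟙 I)) (hR : IsIso R)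
    (A : Ia T I α ⟶ aIR T I α) : Prop :=
  haveI := hL
  haveI := hR
  ∀ (w : T.obj I (T.obj (T.obj I I) I) = T.obj I (T.obj I (T.obj I I)))
    (m₁ : IaI T I α = eqToHom w ≫ T.hom (𝟙 I) (aIR T I α))
    (w2 : T.obj I (T.obj (T.obj I I) I) = T.obj (T.obj I I) (T.obj I I))
    (sq : (eqToHom w ≫ T.hom (𝟙 I) (T.hom (𝟙 I) lamI)) ≫
            (eqToHom (T.assoc I I I).symm ≫ T.hom rhoI (𝟙 I)) =
          (eqToHom w2 ≫ T.hom rhoI (𝟙 (T.obj I I))) ≫ T.hom (𝟙 I) lamI)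
    (w3 : T.obj I (T.obj (T.obj I I) I) = T.obj (T.obj I (T.obj I I)) I)
    (m₃ : (eqToHom w2 ≫ T.hom rhoI (𝟙 (T.obj I I))) ≫ T.hom (𝟙 I) lamI =
          (eqToHom w3 ≫
              T.hom (eqToHom (T.assoc I I I).symm ≫ T.hom rhoI (𝟙 I)) (𝟙 I)) ≫
            (eqToHom (T.assoc I I I) ≫ T.hom (𝟙 I) lamI))
    (m₄ : (eqToHom w3 ≫ T.hom (T.hom (𝟙 I) α) (𝟙 I)) ≫
            (eqToHom (T.assoc I I I) ≫ T.hom (𝟙 I) lamI) =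
          IaI T I α ≫ T.hom (𝟙 I) lamI),
    ((eqToHom m₁ ≫ (eqToHom w ◁ T.cell (𝟙 (𝟙 I)) (inv L))) ▷ Ia T I α) ≫
        ((eqToHom w ≫ T.hom (𝟙 I) (T.hom (𝟙 I) lamI)) ◁ R) ≫
        eqToHom sq ≫ eqToHom m₃ ≫
        ((eqToHom w3 ◁ T.cell (inv R) (𝟙 (𝟙 I))) ▷
          (eqToHom (T.assoc I I I) ≫ T.hom (𝟙 I) lamI)) ≫
        eqToHom m₄ ≫ (IaI T I α ◁ L)
      = IaI T I α ◁ A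

end Assoc


section JK
variable {B : Type u} [Bicategory.{w, v} B] [Bicategory.Strict B]

theorem jk_id_whiskerLeft {a b : B} {f g : a ⟶ b} (θ : f ⟶ g) :
    𝟙 a ◁ θ = eqToHom (Category.id_comp f) ≫ θ ≫ eqToHom (Category.id_comp g).symm := by
  rw [Bicategory.id_whiskerLeft, Bicategory.Strict.leftUnitor_eqToIso,
    Bicategory.Strict.leftUnitor_eqToIso]
  simp

theorem jk_wl_faithful {a b c : B} (p : a = b) {f g : b ⟶ c} {θ θ' : f ⟶ g}
    (h : eqToHom p ◁ θ = eqToHom p ◁ θ') : θ = θ' := by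
  subst p
  simp only [eqToHom_refl, jk_id_whiskerLeft] at h
  rwa [cancel_epi, cancel_mono] at h

theorem jk_wl_full {a b c : B} (p : a = b) {f g : b ⟶ c}
    (ψ : eqToHom p ≫ f ⟶ eqToHom p ≫ g) : ∃ θ : f ⟶ g, eqToHom p ◁ θ = ψ := by
  subst p
  refine ⟨eqToHom (Category.id_comp f).symm ≫ ψ ≫ eqToHom (Category.id_comp g), ?_⟩
  simp [jk_id_whiskerLeft, Bicategory.Strict.leftUnitor_eqToIso]
  erw [Category.assoc, eqToHom_trans, eqToHom_refl, Category.comp_id]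

theorem jk_wl_isIso {a b c : B} (p : a = b) {f g : b ⟶ c} (θ : f ⟶ g)
    (h : IsIso (eqToHom p ◁ θ)) : IsIso θ := by
  subst p
  have e : θ = eqToHom (Category.id_comp f).symm ≫ (𝟙 a ◁ θ) ≫ eqToHom (Category.id_comp g) := by
    simp [jk_id_whiskerLeft, Bicategory.Strict.leftUnitor_eqToIso]
  rw [e]
  simp only [eqToHom_refl] at h
  infer_instance

theorem jk_reflect {a b c : B} {f : a ⟶ b} {g : b ⟶ a} (e : g ≫ f ≅ 𝟙 b)
    {x y : b ⟶ c} (η : x ⟶ y) (hi : IsIso (f ◁ η)) : IsIso η := by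
  have h2 : IsIso ((g ≫ f) ◁ η) := by
    rw [Bicategory.comp_whiskerLeft]
    infer_instance
  have h3 : ((g ≫ f) ◁ η) ≫ e.hom ▷ y = e.hom ▷ x ≫ 𝟙 b ◁ η :=
    Bicategory.whisker_exchange e.hom η
  have h4 : 𝟙 b ◁ η = inv (e.hom ▷ x) ≫ ((g ≫ f) ◁ η ≫ e.hom ▷ y) := by
    rw [h3]; simp
  have h5 : IsIso (𝟙 b ◁ η) := by rw [h4]; infer_instance
  have h6 : η = eqToHom (Category.id_comp x).symm ≫ (𝟙 b ◁ η) ≫ eqToHom (Category.id_comp y) := by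
    simp [jk_id_whiskerLeft, Bicategory.Strict.leftUnitor_eqToIso]
  rw [h6]; infer_instance

variable (T : Tensor2 B)

theorem jk_hom_eqToHom {a b c d : B} (p : a = b) (q : c = d) :
    T.hom (eqToHom p) (eqToHom q) = eqToHom (by rw [p, q]) := by
  cases p; cases q; simp [T.hom_id]

theorem jk3 (a : B) {c d : B} (q : c = d) :
    T.hom (𝟙 a) (eqToHom q) = eqToHom (by rw [q]) := by
  cases q; simp [T.hom_id]

theorem jk4 {c d : B} (q : c = d) (a : B) :
    T.hom (eqToHom q) (𝟙 a) = eqToHom (by rw [q]) := by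
  cases q; simp [T.hom_id]

theorem jk1 (a : B) {x y z : B} (u : x ⟶ y) (v : y ⟶ z) :
    T.hom (𝟙 a) (u ≫ v) = T.hom (𝟙 a) u ≫ T.hom (𝟙 a) v := by
  simpa using T.hom_comp (𝟙 a) (𝟙 a) u v

theorem jk2 {x y z : B} (u : x ⟶ y) (v : y ⟶ z) (a : B) :
    T.hom (u ≫ v) (𝟙 a) = T.hom u (𝟙 a) ≫ T.hom v (𝟙 a) := by
  simpa using T.hom_comp u v (𝟙 a) (𝟙 a)

theorem jk_comp {a b c a' b' c' : B} (f : a ⟶ b) (g : b ⟶ c) (f' : a' ⟶ b') (g' : b' ⟶ c') :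
    T.hom f f' ≫ T.hom g g' = T.hom (f ≫ g) (f' ≫ g') :=
  (T.hom_comp f g f' g').symm

theorem jk_comp_assoc {a b c a' b' c' : B} (f : a ⟶ b) (g : b ⟶ c) (f' : a' ⟶ b') (g' : b' ⟶ c')
    {Z : B} (h : T.obj c c' ⟶ Z) :
    T.hom f f' ≫ T.hom g g' ≫ h = T.hom (f ≫ g) (f' ≫ g') ≫ h := by
  rw [← Category.assoc, jk_comp]

theorem jk_ha {a a' b b' c c' : B} (f : a ⟶ a') (g : b ⟶ b') (k : c ⟶ c') :
    T.hom (T.hom f g) k ≫ eqToHom (T.assoc a' b' c') =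
      eqToHom (T.assoc a b c) ≫ T.hom f (T.hom g k) :=
  T.hom_assoc f g k

theorem jk_ha_assoc {a a' b b' c c' : B} (f : a ⟶ a') (g : b ⟶ b') (k : c ⟶ c')
    {Z : B} (h : T.obj a' (T.obj b' c') ⟶ Z) :
    T.hom (T.hom f g) k ≫ eqToHom (T.assoc a' b' c') ≫ h =
      eqToHom (T.assoc a b c) ≫ T.hom f (T.hom g k) ≫ h := by
  rw [← Category.assoc, T.hom_assoc, Category.assoc]

theorem jk_ha' {a a' b b' c c' : B} (f : a ⟶ a') (g : b ⟶ b') (k : c ⟶ c') :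
    T.hom f (T.hom g k) ≫ eqToHom (T.assoc a' b' c').symm =
      eqToHom (T.assoc a b c).symm ≫ T.hom (T.hom f g) k := by
  have h := T.hom_assoc f g k
  calc T.hom f (T.hom g k) ≫ eqToHom (T.assoc a' b' c').symm
      = eqToHom (T.assoc a b c).symm ≫
          (eqToHom (T.assoc a b c) ≫ T.hom f (T.hom g k)) ≫
          eqToHom (T.assoc a' b' c').symm := by simp
    _ = eqToHom (T.assoc a b c).symm ≫
          (T.hom (T.hom f g) k ≫ eqToHom (T.assoc a' b' c')) ≫
          eqToHom (T.assoc a' b' c').symm := by rw [h]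
    _ = eqToHom (T.assoc a b c).symm ≫ T.hom (T.hom f g) k := by simp

theorem jk_ha'_assoc {a a' b b' c c' : B} (f : a ⟶ a') (g : b ⟶ b') (k : c ⟶ c')
    {Z : B} (h : T.obj (T.obj a' b') c' ⟶ Z) :
    T.hom f (T.hom g k) ≫ eqToHom (T.assoc a' b' c').symm ≫ h =
      eqToHom (T.assoc a b c).symm ≫ T.hom (T.hom f g) k ≫ h := by
  rw [← Category.assoc, jk_ha', Category.assoc]

end JK

/-- Given a unit object `(I, α)` in a strict semi-monoidal 2-category, with chosen left
constraint `(λ_I, L)` and right constraint `(ρ_I, R)` at `I`, there are unique 2-cells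
`D : α ⟹ λ_I` and `E : ρ_I ⟹ α` characterized by `(I ⊗ D) ∘ L = A` and `(E ⊗ I) ∘ R = A`,
where `A : I⊗α ⟹ α⊗I` is the canonical associator 2-cell of `α` (defined by the pasting
equation (9)); moreover any such `D` and `E` are invertible. -/
theorem unit2_compare_constraints_with_alpha
    {B : Type*} [Bicategory B] [Bicategory.Strict B] (T : Tensor2 B)
    {I : B} {α : T.obj I I ⟶ I} (h : IsUnit2 T I α)
    (lamI : T.obj I I ⟶ I)
    (L : T.hom (𝟙 I) lamI ⟶ aIR T I α) (hlam : IsEquiArrow lamI) (hL : IsIso L)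
    (rhoI : T.obj I I ⟶ I)
    (R : Ia T I α ⟶ eqToHom (T.assoc I I I).symm ≫ T.hom rhoI (𝟙 I))
    (hrho : IsEquiArrow rhoI) (hR : IsIso R)
    (A : Ia T I α ⟶ aIR T I α)
    (hA : DefinesAssociator T I α lamI L hL rhoI R hR A) :
    ((∃! D : α ⟶ lamI, T.cell (𝟙 (𝟙 I)) D ≫ L = A) ∧
      (∀ D : α ⟶ lamI, T.cell (𝟙 (𝟙 I)) D ≫ L = A → IsIso D)) ∧
    ((∃! E : rhoI ⟶ α,
        R ≫ (eqToHom (T.assoc I I I).symm ◁ T.cell E (𝟙 (𝟙 I))) = A) ∧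
      (∀ E : rhoI ⟶ α,
        R ≫ (eqToHom (T.assoc I I I).symm ◁ T.cell E (𝟙 (𝟙 I))) = A → IsIso E)) := by
    classical
  obtain ⟨⟨hcl, hcr⟩, β, ⟨i1⟩, ⟨i2⟩⟩ := h
  haveI := hL; haveI := hR
  -- instantiate the pasting equation
  have w : T.obj I (T.obj (T.obj I I) I) = T.obj I (T.obj I (T.obj I I)) := by
    rw [T.assoc]
  have m₁ : IaI T I α = eqToHom w ≫ T.hom (𝟙 I) (aIR T I α) := by
    rw [IaI, aIR, jk1, jk3]
    simp
  have w2 : T.obj I (T.obj (T.obj I I) I) = T.obj (T.obj I I) (T.obj I I) := by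
    rw [T.assoc I I I, ← T.assoc I I (T.obj I I)]
  have sq : (eqToHom w ≫ T.hom (𝟙 I) (T.hom (𝟙 I) lamI)) ≫
        (eqToHom (T.assoc I I I).symm ≫ T.hom rhoI (𝟙 I)) =
      (eqToHom w2 ≫ T.hom rhoI (𝟙 (T.obj I I))) ≫ T.hom (𝟙 I) lamI := by
    simp only [Category.assoc, jk_ha' T, jk_ha'_assoc T, jk_comp T, jk_comp_assoc T,
      T.hom_id, eqToHom_trans, eqToHom_trans_assoc, Category.id_comp, Category.comp_id]
  have w3 : T.obj I (T.obj (T.obj I I) I) = T.obj (T.obj I (T.obj I I)) I :=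
    (T.assoc I (T.obj I I) I).symm
  have m₃ : (eqToHom w2 ≫ T.hom rhoI (𝟙 (T.obj I I))) ≫ T.hom (𝟙 I) lamI =
      (eqToHom w3 ≫
          T.hom (eqToHom (T.assoc I I I).symm ≫ T.hom rhoI (𝟙 I)) (𝟙 I)) ≫
        (eqToHom (T.assoc I I I) ≫ T.hom (𝟙 I) lamI) := by
    rw [jk2, jk4]
    simp only [Category.assoc, jk_ha T, jk_ha_assoc T, jk_comp T, jk_comp_assoc T,
      T.hom_id, eqToHom_trans, eqToHom_trans_assoc, Category.id_comp, Category.comp_id]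
  have m₄ : (eqToHom w3 ≫ T.hom (T.hom (𝟙 I) α) (𝟙 I)) ≫
        (eqToHom (T.assoc I I I) ≫ T.hom (𝟙 I) lamI) =
      IaI T I α ≫ T.hom (𝟙 I) lamI := by
    simp only [Category.assoc, jk_ha T, jk_ha_assoc T, eqToHom_trans, eqToHom_trans_assoc,
      eqToHom_refl, Category.id_comp, IaI]
  have hA' := hA w m₁ w2 sq w3 m₃ m₄
  -- the pasted composite is invertible
  haveI : IsIso (T.cell (𝟙 (𝟙 I)) (inv L)) :=
    inferInstanceAs (IsIso ((lFun T I (T.obj I (T.obj I I)) (T.obj I I)).map (inv L)))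
  haveI : IsIso (T.cell (inv R) (𝟙 (𝟙 I))) :=
    inferInstanceAs (IsIso ((rFun T I (T.obj I (T.obj I I)) (T.obj I I)).map (inv R)))
  have hwl : IsIso (IaI T I α ◁ A) := by
    rw [← hA']
    repeat' apply IsIso.comp_isIso'
    all_goals first | infer_instance | exact (eqToIso m₄).isIso_hom
  -- reflect invertibility along whiskering with the equi-arrow `IaI`
  have hAiso : IsIso A := by
    have eq1 : T.hom (𝟙 I) (T.hom β (𝟙 I)) ≫ IaI T I α =
        T.hom (𝟙 I) (T.hom (β ≫ α) (𝟙 I)) := by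
      rw [IaI, jk_comp T, jk2]
      simp
    have j : T.hom (β ≫ α) (𝟙 I) ≅ 𝟙 (T.obj I I) :=
      (rFun T I I I).mapIso i2 ≪≫ eqToIso (T.hom_id I I)
    have j2 : T.hom (𝟙 I) (T.hom (β ≫ α) (𝟙 I)) ≅ T.hom (𝟙 I) (𝟙 (T.obj I I)) := by
      refine ⟨T.cell (𝟙 (𝟙 I)) j.hom, T.cell (𝟙 (𝟙 I)) j.inv, ?_, ?_⟩ <;>
        · rw [← T.cell_comp]; simp [T.cell_id]
    have e : T.hom (𝟙 I) (T.hom β (𝟙 I)) ≫ IaI T I α ≅ 𝟙 (T.obj I (T.obj I I)) :=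
      eqToIso eq1 ≪≫ j2 ≪≫ eqToIso (T.hom_id I (T.obj I I))
    exact jk_reflect e A hwl
  constructor
  · -- the 2-cell D : α ⟶ lamI
    haveI hFf : (lFun T I (T.obj I I) I).Faithful := (hcl _ _).faithful
    haveI hFF : (lFun T I (T.obj I I) I).Full := (hcl _ _).full
    set F := lFun T I (T.obj I I) I with hF
    have hmap : ∀ D : α ⟶ lamI, F.map D = T.cell (𝟙 (𝟙 I)) D := fun _ => rfl
    constructor
    · refine ⟨F.preimage (A ≫ inv L :), ?_, ?_⟩
      · show T.cell (𝟙 (𝟙 I)) (F.preimage (A ≫ inv L :)) ≫ L = A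
        erw [← hmap, F.map_preimage]
        exact (by simp : (A ≫ inv L) ≫ L = A)
      · intro D hD
        apply F.map_injective
        erw [F.map_preimage, hmap]
        rw [← hD]
        exact (by simp : T.cell (𝟙 (𝟙 I)) D = (T.cell (𝟙 (𝟙 I)) D ≫ L) ≫ inv L)
    · intro D hD
      have : F.map D = A ≫ inv L := by
        rw [hmap, ← hD]; exact (by simp : T.cell (𝟙 (𝟙 I)) D = (T.cell (𝟙 (𝟙 I)) D ≫ L) ≫ inv L)
      haveI : IsIso (F.map D) := by rw [this]; exact @IsIso.comp_isIso' _ _ _ _ _ _ _ hAiso (@IsIso.inv_isIso _ _ _ _ _ hL)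
      exact isIso_of_reflects_iso D F
  · -- the 2-cell E : rhoI ⟶ α
    haveI hGf : (rFun T I (T.obj I I) I).Faithful := (hcr _ _).faithful
    haveI hGF : (rFun T I (T.obj I I) I).Full := (hcr _ _).full
    set G := rFun T I (T.obj I I) I with hG
    have hmap : ∀ E : rhoI ⟶ α, G.map E = T.cell E (𝟙 (𝟙 I)) := fun _ => rfl
    have key : ∀ E : rhoI ⟶ α,
        (R ≫ (eqToHom (T.assoc I I I).symm ◁ T.cell E (𝟙 (𝟙 I))) = A) ↔
          (eqToHom (T.assoc I I I).symm ◁ T.cell E (𝟙 (𝟙 I)) =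
            inv R ≫ A) := by
      intro E
      constructor
      · intro hE; rw [← hE]; simp
      · intro hE; rw [hE]; simp; rfl
    constructor
    · obtain ⟨θ, hθ⟩ := jk_wl_full (T.assoc I I I).symm
        (show eqToHom (T.assoc I I I).symm ≫ T.hom rhoI (𝟙 I) ⟶
            eqToHom (T.assoc I I I).symm ≫ T.hom α (𝟙 I) from inv R ≫ A)
      refine ⟨G.preimage θ, ?_, ?_⟩
      · show R ≫ (eqToHom (T.assoc I I I).symm ◁ T.cell (G.preimage θ) (𝟙 (𝟙 I))) = A
        rw [key, ← hmap]; erw [G.map_preimage, hθ]; rfl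
      · intro E hE
        replace hE : R ≫ (eqToHom (T.assoc I I I).symm ◁ T.cell E (𝟙 (𝟙 I))) = A := hE
        rw [key] at hE
        apply G.map_injective
        erw [G.map_preimage]
        apply jk_wl_faithful (T.assoc I I I).symm
        erw [hθ]; exact hE
    · intro E hE
      rw [key] at hE
      have : IsIso (eqToHom (T.assoc I I I).symm ◁ T.cell E (𝟙 (𝟙 I))) := by
        rw [hE]; exact @IsIso.comp_isIso' _ _ _ _ _ _ _ (@IsIso.inv_isIso _ _ _ _ _ hR) hAiso
      have h2 : IsIso (T.cell E (𝟙 (𝟙 I))) := jk_wl_isIso _ _ this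
      haveI : IsIso (G.map E) := h2
      exact isIso_of_reflects_iso E G
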